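/- For every natural number n ≥ 1, one has n · Vol(Bⁿ) · ∫_0^∞ r^{n−1} (2/(1+r²))ⁿ dr = (n+1) · Vol(B^{n+1}), where Vol(Bᵏ) denotes the Lebesgue measure of the open unit ball of the k-dimensional Euclidean space. -/

import Mathlib

section Aux
open MeasureTheory Real Set

noncomputable def vB (n : ℕ) : ℝ :=
  (volume (Metric.ball (0 : EuclideanSpace ℝ (Fin n)) 1)).toReal

noncomputable def Ssin (k : ℕ) : ℝ := ∫ x in (0:ℝ)..π, Real.sin x ^ k

lemma vB_eq (n : ℕ) (hn : 1 ≤ n) : vB n = Real.sqrt π ^ n / Real.Gamma (n / 2 + 1) := by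
  haveI : Nonempty (Fin n) := ⟨⟨0, hn⟩⟩
  rw [vB, EuclideanSpace.volume_ball, Fintype.card_fin]
  rw [ENNReal.toReal_mul, ENNReal.toReal_pow, ENNReal.toReal_ofReal zero_le_one, one_pow, one_mul,
    ENNReal.toReal_ofReal]
  positivity

lemma Gamma_arg_pos (n : ℕ) : (0:ℝ) < (n:ℝ) / 2 + 1 := by positivity

lemma vB_rec (n : ℕ) (hn : 1 ≤ n) : vB (n + 2) = 2 * π / (n + 2) * vB n := by
  rw [vB_eq n hn, vB_eq (n+2) (by omega)]
  have h1 : ((n:ℕ)+2 : ℕ) = (n:ℕ) + 2 := rfl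
  push_cast
  have h2 : ((n:ℝ) + 2) / 2 + 1 = ((n:ℝ)/2 + 1) + 1 := by ring
  rw [h2, Real.Gamma_add_one (Gamma_arg_pos n).ne']
  have hg : Real.Gamma ((n:ℝ)/2 + 1) ≠ 0 := (Real.Gamma_pos_of_pos (Gamma_arg_pos n)).ne'
  have hs : Real.sqrt π ^ (n + 2) = π * Real.sqrt π ^ n := by
    rw [pow_add, sq_sqrt Real.pi_pos.le, mul_comm]
  rw [hs]
  field_simp

lemma Ssin_rec (k : ℕ) : Ssin (k + 2) = (k + 1) / (k + 2) * Ssin k := by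
  rw [Ssin, Ssin, integral_sin_pow]
  simp [Real.sin_pi]

lemma Gamma_three_halves : Real.Gamma (3/2) = Real.sqrt π / 2 := by
  have : (3/2 : ℝ) = 1/2 + 1 := by norm_num
  rw [this, Real.Gamma_add_one (by norm_num), Real.Gamma_one_half_eq]
  ring

lemma vB_one : vB 1 = 2 := by
  rw [vB_eq 1 le_rfl]
  have : ((1:ℕ):ℝ) / 2 + 1 = 3/2 := by norm_num
  rw [this, Gamma_three_halves]
  have := Real.sqrt_pos.mpr Real.pi_pos
  field_simp

lemma vB_two : vB 2 = π := by
  rw [vB_eq 2 (by norm_num)]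
  have : ((2:ℕ):ℝ) / 2 + 1 = 2 := by norm_num
  rw [this, Real.Gamma_two, pow_two, Real.mul_self_sqrt Real.pi_pos.le]
  simp

lemma vB_three : vB 3 = 4 * π / 3 := by
  have := vB_rec 1 le_rfl
  rw [vB_one] at this
  rw [this]; push_cast; ring

lemma Ssin_zero : Ssin 0 = π := by simp [Ssin]

lemma Ssin_one : Ssin 1 = 2 := by rw [Ssin]; simp [integral_sin]; norm_num

lemma key : ∀ m : ℕ, ((m:ℝ) + 1) * vB (m+1) * Ssin m = ((m:ℝ) + 2) * vB (m+2) := by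
  intro m
  induction m using Nat.twoStepInduction with
  | zero => rw [vB_one, vB_two, Ssin_zero]; push_cast; ring
  | one => rw [vB_two, vB_three, Ssin_one]; push_cast; ring
  | more k ih _ =>
    rw [Ssin_rec, vB_rec (k+1) (by omega), show k+2+2 = (k+2)+2 from rfl,
      vB_rec (k+2) (by omega)]
    have hk1 : ((k:ℝ) + 2) ≠ 0 := by positivity
    have hk2 : ((k:ℝ) + 1 + 2) ≠ 0 := by positivity
    have hk3 : ((k:ℝ) + 2 + 2) ≠ 0 := by positivity
    push_cast at ih ⊢
    field_simp
    linear_combination ((k:ℝ) + 3) * ih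

lemma sin_two_arctan (r : ℝ) : Real.sin (2 * Real.arctan r) = 2 * r / (1 + r ^ 2) := by
  rw [two_mul, Real.sin_add, Real.sin_arctan, Real.cos_arctan]
  have h : (0:ℝ) < 1 + r ^ 2 := by positivity
  have hs : Real.sqrt (1 + r ^ 2) * Real.sqrt (1 + r ^ 2) = 1 + r ^ 2 :=
    Real.mul_self_sqrt h.le
  have hs' : Real.sqrt (1 + r ^ 2) ≠ 0 := by positivity
  field_simp
  linear_combination (-2 * r) * hs

lemma image_two_arctan : (fun r : ℝ => 2 * Real.arctan r) '' Set.Ioi 0 = Set.Ioo 0 π := by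
  ext y
  constructor
  · rintro ⟨r, hr, rfl⟩
    have h1 : 0 < Real.arctan r := by
      have := Real.arctan_strictMono (Set.mem_Ioi.mp hr)
      simpa using this
    have h2 := Real.arctan_lt_pi_div_two r
    refine ⟨by simp only; linarith, by simp only; linarith⟩
  · rintro ⟨h0, hπ⟩
    refine ⟨Real.tan (y / 2), ?_, ?_⟩
    · exact Real.tan_pos_of_pos_of_lt_pi_div_two (by linarith) (by linarith)
    · show 2 * Real.arctan (Real.tan (y / 2)) = y
      rw [Real.arctan_tan (by linarith [Real.pi_pos]) (by linarith)]
      ring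

lemma integral_eq_Ssin (m : ℕ) :
    (∫ r in Set.Ioi (0:ℝ), r ^ m * (2 / (1 + r ^ 2)) ^ (m + 1)) = Ssin m := by
  have hf' : ∀ x ∈ Set.Ioi (0:ℝ), HasDerivWithinAt (fun r : ℝ => 2 * Real.arctan r)
      (2 / (1 + x ^ 2)) (Set.Ioi 0) x := by
    intro x _
    have := (Real.hasDerivAt_arctan x).const_mul (2:ℝ)
    simpa [div_eq_mul_inv, mul_comm, mul_assoc] using this.hasDerivWithinAt
  have hinj : Set.InjOn (fun r : ℝ => 2 * Real.arctan r) (Set.Ioi 0) := fun a _ b _ h =>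
    Real.arctan_injective (mul_left_cancel₀ two_ne_zero h)
  have h := MeasureTheory.integral_image_eq_integral_abs_deriv_smul measurableSet_Ioi hf' hinj
    (fun x => Real.sin x ^ m)
  rw [image_two_arctan] at h
  have hS : Ssin m = ∫ x in Set.Ioo (0:ℝ) π, Real.sin x ^ m := by
    rw [Ssin, intervalIntegral.integral_of_le Real.pi_pos.le,
      MeasureTheory.integral_Ioc_eq_integral_Ioo]
  rw [hS, h]
  apply MeasureTheory.integral_congr_ae
  filter_upwards with r
  have h1 : (0:ℝ) < 1 + r ^ 2 := by positivity
  rw [smul_eq_mul, sin_two_arctan, abs_of_pos (by positivity)]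
  rw [div_pow, div_pow, mul_pow]
  field_simp
  ring

end Aux


open MeasureTheory

/-- The identity `ω_{n-1} · I = ω_n`, where `I = ∫_0^∞ r^{n-1}(2/(1+r²))ⁿ dr`,
`ω_{n-1} = n·Vol(Bⁿ)` is the surface measure of `S^{n-1} ⊂ ℝⁿ` and
`ω_n = (n+1)·Vol(B^{n+1})` is the surface measure of `Sⁿ ⊂ ℝ^{n+1}`. -/
theorem sphere_volume_radial_integral (n : ℕ) (hn : 1 ≤ n) :
    (n : ℝ) * (volume (Metric.ball (0 : EuclideanSpace ℝ (Fin n)) 1)).toReal *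
        ∫ r in Set.Ioi (0 : ℝ), r ^ (n - 1) * (2 / (1 + r ^ 2)) ^ n
      = ((n : ℝ) + 1) *
        (volume (Metric.ball (0 : EuclideanSpace ℝ (Fin (n + 1))) 1)).toReal := by
  obtain ⟨m, rfl⟩ : ∃ m, n = m + 1 := ⟨n - 1, (Nat.succ_pred_eq_of_pos hn).symm⟩
  have hkey := key m
  simp only [vB] at hkey
  simp only [Nat.add_sub_cancel, integral_eq_Ssin m]
  push_cast at hkey ⊢
  linarith [hkey]
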